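/- (Weak convergence bound) Given a balanceable nonnegative matrix A and ε ∈ (0,1), Osborne's cyclic algorithm started at any u_0 finds an iterate u_t with ‖∇φ(u_t)‖₁/φ(u_t) ≤ ε within O(log₂(φ(u_0)/φ*) / ε²) cycles, where φ* = min φ. -/

import Mathlib

open Real Finset

noncomputable def rowSum {n : ℕ} (A : Matrix (Fin n) (Fin n) ℝ) (u : Fin n → ℝ) (j : Fin n) : ℝ :=
  ∑ i, Real.exp (u j - u i) * A j i

noncomputable def colSum {n : ℕ} (A : Matrix (Fin n) (Fin n) ℝ) (u : Fin n → ℝ) (j : Fin n) : ℝ :=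
  ∑ i, Real.exp (u i - u j) * A i j

noncomputable def potential {n : ℕ} (A : Matrix (Fin n) (Fin n) ℝ) (u : Fin n → ℝ) : ℝ :=
  ∑ i, ∑ j, Real.exp (u i - u j) * A i j

/-- One Osborne update: balance the j-th row/column pair. -/
noncomputable def osborneUpdate {n : ℕ} (A : Matrix (Fin n) (Fin n) ℝ)
    (u : Fin n → ℝ) (j : Fin n) : Fin n → ℝ :=
  Function.update u j
    (u j + (1 / 2) * (Real.log (colSum A u j) - Real.log (rowSum A u j)))

/-- One full cycle of Osborne's algorithm, updating coordinates 0, 1, ..., n-1 in order. -/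
noncomputable def osborneCycle {n : ℕ} (A : Matrix (Fin n) (Fin n) ℝ)
    (u : Fin n → ℝ) : Fin n → ℝ :=
  (List.finRange n).foldl (fun w j => osborneUpdate A w j) u

/-- End-of-cycle iterates of cyclic Osborne started at u0. -/
noncomputable def osborneIter {n : ℕ} (A : Matrix (Fin n) (Fin n) ℝ)
    (u0 : Fin n → ℝ) (k : ℕ) : Fin n → ℝ :=
  (osborneCycle A)^[k] u0

namespace Osb

variable {n : ℕ} {A : Matrix (Fin n) (Fin n) ℝ}

lemma rowSum_nonneg (hA : ∀ i j, 0 ≤ A i j) (u : Fin n → ℝ) (j : Fin n) : 0 ≤ rowSum A u j :=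
  Finset.sum_nonneg fun i _ => mul_nonneg (Real.exp_pos _).le (hA j i)

lemma colSum_nonneg (hA : ∀ i j, 0 ≤ A i j) (u : Fin n → ℝ) (j : Fin n) : 0 ≤ colSum A u j :=
  Finset.sum_nonneg fun i _ => mul_nonneg (Real.exp_pos _).le (hA i j)

lemma rowSum_pos (hA : ∀ i j, 0 ≤ A i j) (u : Fin n → ℝ) (j : Fin n) (h : ∃ i, A j i ≠ 0) :
    0 < rowSum A u j := by
  obtain ⟨i, hi⟩ := h
  exact Finset.sum_pos' (fun i _ => mul_nonneg (Real.exp_pos _).le (hA j i))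
    ⟨i, Finset.mem_univ i, mul_pos (Real.exp_pos _) ((hA j i).lt_of_ne (Ne.symm hi))⟩

lemma colSum_pos (hA : ∀ i j, 0 ≤ A i j) (u : Fin n → ℝ) (j : Fin n) (h : ∃ i, A i j ≠ 0) :
    0 < colSum A u j := by
  obtain ⟨i, hi⟩ := h
  exact Finset.sum_pos' (fun i _ => mul_nonneg (Real.exp_pos _).le (hA i j))
    ⟨i, Finset.mem_univ i, mul_pos (Real.exp_pos _) ((hA i j).lt_of_ne (Ne.symm hi))⟩

lemma potential_eq_rowSum (u : Fin n → ℝ) : potential A u = ∑ j, rowSum A u j := rfl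

lemma potential_eq_colSum (u : Fin n → ℝ) : potential A u = ∑ j, colSum A u j :=
  Finset.sum_comm

lemma potential_nonneg (hA : ∀ i j, 0 ≤ A i j) (u : Fin n → ℝ) : 0 ≤ potential A u := by
  rw [potential_eq_rowSum]
  exact Finset.sum_nonneg fun j _ => rowSum_nonneg hA u j

lemma rowSum_le_potential (hA : ∀ i j, 0 ≤ A i j) (u : Fin n → ℝ) (j : Fin n) :
    rowSum A u j ≤ potential A u := by
  rw [potential_eq_rowSum]
  exact Finset.single_le_sum (fun i _ => rowSum_nonneg hA u i) (Finset.mem_univ j)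

lemma potential_pos (hA : ∀ i j, 0 ≤ A i j) (hr : ∀ j : Fin n, ∃ i, A j i ≠ 0)
    (hn : 0 < n) (u : Fin n → ℝ) : 0 < potential A u := by
  have j : Fin n := ⟨0, hn⟩
  calc (0:ℝ) < rowSum A u j := rowSum_pos hA u j (hr j)
  _ ≤ potential A u := rowSum_le_potential hA u j

lemma exp_half_log_div (r c : ℝ) (hr : 0 < r) (hc : 0 < c) :
    Real.exp ((1/2) * (Real.log c - Real.log r)) = Real.sqrt c / Real.sqrt r := by
  rw [mul_sub, Real.exp_sub]
  rw [Real.sqrt_eq_rpow, Real.sqrt_eq_rpow, Real.rpow_def_of_pos hc, Real.rpow_def_of_pos hr]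
  ring_nf


variable {n : ℕ} {A : Matrix (Fin n) (Fin n) ℝ}

/-- The increment used at coordinate `j`. -/
noncomputable def del (A : Matrix (Fin n) (Fin n) ℝ) (v : Fin n → ℝ) (j : Fin n) : ℝ :=
  (1 / 2) * (Real.log (colSum A v j) - Real.log (rowSum A v j))

lemma update_self (v : Fin n → ℝ) (j : Fin n) :
    osborneUpdate A v j j = v j + del A v j := Function.update_self _ _ _

lemma update_other (v : Fin n → ℝ) {j m : Fin n} (h : m ≠ j) :
    osborneUpdate A v j m = v m := Function.update_of_ne h _ _

lemma exp_del (v : Fin n → ℝ) (j : Fin n) (hr : 0 < rowSum A v j) (hc : 0 < colSum A v j) :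
    Real.exp (del A v j) = Real.sqrt (colSum A v j) / Real.sqrt (rowSum A v j) := by
  unfold del
  rw [mul_sub, Real.exp_sub, Real.sqrt_eq_rpow, Real.sqrt_eq_rpow,
    Real.rpow_def_of_pos hc, Real.rpow_def_of_pos hr]
  ring_nf

lemma exp_neg_del (v : Fin n → ℝ) (j : Fin n) (hr : 0 < rowSum A v j) (hc : 0 < colSum A v j) :
    Real.exp (-del A v j) = Real.sqrt (rowSum A v j) / Real.sqrt (colSum A v j) := by
  have : -del A v j = (1/2) * (Real.log (rowSum A v j) - Real.log (colSum A v j)) := by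
    unfold del; ring
  rw [this, mul_sub, Real.exp_sub, Real.sqrt_eq_rpow, Real.sqrt_eq_rpow,
    Real.rpow_def_of_pos hc, Real.rpow_def_of_pos hr]
  ring_nf

lemma rowSum_update_self (hdiag : ∀ i, A i i = 0) (v : Fin n → ℝ) (j : Fin n) :
    rowSum A (osborneUpdate A v j) j = Real.exp (del A v j) * rowSum A v j := by
  unfold rowSum
  rw [Finset.mul_sum]
  refine Finset.sum_congr rfl fun i _ => ?_
  by_cases hij : i = j
  · subst hij; simp [hdiag i]
  · rw [update_self, update_other v hij,
      show v j + del A v j - v i = del A v j + (v j - v i) from by ring, Real.exp_add, mul_assoc]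

lemma colSum_update_self (hdiag : ∀ i, A i i = 0) (v : Fin n → ℝ) (j : Fin n) :
    colSum A (osborneUpdate A v j) j = Real.exp (-del A v j) * colSum A v j := by
  unfold colSum
  rw [Finset.mul_sum]
  refine Finset.sum_congr rfl fun i _ => ?_
  by_cases hij : i = j
  · subst hij; simp [hdiag i]
  · rw [update_self, update_other v hij,
      show v i - (v j + del A v j) = -del A v j + (v i - v j) from by ring, Real.exp_add, mul_assoc]

lemma rowSum_update_balanced (hdiag : ∀ i, A i i = 0) (v : Fin n → ℝ) (j : Fin n)
    (hr : 0 < rowSum A v j) (hc : 0 < colSum A v j) :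
    rowSum A (osborneUpdate A v j) j = Real.sqrt (rowSum A v j) * Real.sqrt (colSum A v j) := by
  have hsr : Real.sqrt (rowSum A v j) ≠ 0 := by positivity
  rw [rowSum_update_self hdiag, exp_del v j hr hc, div_mul_eq_mul_div, div_eq_iff hsr]
  nth_rewrite 1 [← Real.mul_self_sqrt hr.le]
  ring

lemma colSum_update_balanced (hdiag : ∀ i, A i i = 0) (v : Fin n → ℝ) (j : Fin n)
    (hr : 0 < rowSum A v j) (hc : 0 < colSum A v j) :
    colSum A (osborneUpdate A v j) j = Real.sqrt (rowSum A v j) * Real.sqrt (colSum A v j) := by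
  have hsc : Real.sqrt (colSum A v j) ≠ 0 := by positivity
  rw [colSum_update_self hdiag, exp_neg_del v j hr hc, div_mul_eq_mul_div, div_eq_iff hsc]
  nth_rewrite 1 [← Real.mul_self_sqrt hc.le]
  ring

lemma rowSum_update_other (v : Fin n → ℝ) {j m : Fin n} (h : m ≠ j) :
    rowSum A (osborneUpdate A v j) m
      = rowSum A v m + (Real.exp (-del A v j) - 1) * (Real.exp (v m - v j) * A m j) := by
  unfold rowSum
  rw [← Finset.sum_erase_add _ _ (Finset.mem_univ j), ← Finset.sum_erase_add _ _ (Finset.mem_univ j)]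
  have h1 : ∀ i ∈ Finset.univ.erase j,
      Real.exp (osborneUpdate A v j m - osborneUpdate A v j i) * A m i
        = Real.exp (v m - v i) * A m i := by
    intro i hi
    rw [update_other v h, update_other v (Finset.ne_of_mem_erase hi)]
  rw [Finset.sum_congr rfl h1]
  rw [update_other v h, update_self]
  have : Real.exp (v m - (v j + del A v j)) = Real.exp (-del A v j) * Real.exp (v m - v j) := by
    rw [← Real.exp_add]; ring_nf
  rw [this]
  ring

lemma colSum_update_other (v : Fin n → ℝ) {j m : Fin n} (h : m ≠ j) :
    colSum A (osborneUpdate A v j) m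
      = colSum A v m + (Real.exp (del A v j) - 1) * (Real.exp (v j - v m) * A j m) := by
  unfold colSum
  rw [← Finset.sum_erase_add _ _ (Finset.mem_univ j), ← Finset.sum_erase_add _ _ (Finset.mem_univ j)]
  have h1 : ∀ i ∈ Finset.univ.erase j,
      Real.exp (osborneUpdate A v j i - osborneUpdate A v j m) * A i m
        = Real.exp (v i - v m) * A i m := by
    intro i hi
    rw [update_other v h, update_other v (Finset.ne_of_mem_erase hi)]
  rw [Finset.sum_congr rfl h1]
  rw [update_other v h, update_self]
  have : Real.exp (v j + del A v j - v m) = Real.exp (del A v j) * Real.exp (v j - v m) := by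
    rw [← Real.exp_add]; ring_nf
  rw [this]
  ring


lemma abs_combo_eq (r c : ℝ) (hr : 0 < r) (hc : 0 < c) :
    |Real.sqrt r / Real.sqrt c - 1| * c + |Real.sqrt c / Real.sqrt r - 1| * r = |r - c| := by
  have ha : 0 < Real.sqrt r := Real.sqrt_pos.2 hr
  have hb : 0 < Real.sqrt c := Real.sqrt_pos.2 hc
  have h1 : Real.sqrt r * Real.sqrt r = r := Real.mul_self_sqrt hr.le
  have h2 : Real.sqrt c * Real.sqrt c = c := Real.mul_self_sqrt hc.le
  set a := Real.sqrt r
  set b := Real.sqrt c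
  have e1 : |a / b - 1| * c = |a - b| * b := by
    rw [show a / b - 1 = (a - b) / b from by field_simp, abs_div, abs_of_pos hb]
    field_simp
    nlinarith [abs_nonneg (a-b)]
  have e2 : |b / a - 1| * r = |b - a| * a := by
    rw [show b / a - 1 = (b - a) / a from by field_simp, abs_div, abs_of_pos ha]
    field_simp
    nlinarith [abs_nonneg (b-a)]
  rw [e1, e2, abs_sub_comm b a]
  rw [show |a - b| * b + |a - b| * a = |a - b| * |a + b| from by
    rw [abs_of_pos (by positivity : (0:ℝ) < a + b)]; ring]
  rw [← abs_mul]
  congr 1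
  nlinarith

lemma abs_le_sq_add_min (r c : ℝ) (hr : 0 ≤ r) (hc : 0 ≤ c) :
    |r - c| ≤ (Real.sqrt r - Real.sqrt c)^2
      + 2 * |Real.sqrt r - Real.sqrt c| * Real.sqrt (min r c) := by
  have h1 : Real.sqrt r * Real.sqrt r = r := Real.mul_self_sqrt hr
  have h2 : Real.sqrt c * Real.sqrt c = c := Real.mul_self_sqrt hc
  rcases le_total r c with h | h
  · have hab : Real.sqrt r ≤ Real.sqrt c := Real.sqrt_le_sqrt h
    rw [min_eq_left h, abs_of_nonpos (by linarith), abs_of_nonpos (by linarith)]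
    nlinarith [Real.sqrt_nonneg r, Real.sqrt_nonneg c]
  · have hab : Real.sqrt c ≤ Real.sqrt r := Real.sqrt_le_sqrt h
    rw [min_eq_right h, abs_of_nonneg (by linarith), abs_of_nonneg (by linarith)]
    nlinarith [Real.sqrt_nonneg r, Real.sqrt_nonneg c]

lemma potential_update (hdiag : ∀ i, A i i = 0) (v : Fin n → ℝ) (j : Fin n)
    (hr : 0 < rowSum A v j) (hc : 0 < colSum A v j) :
    potential A (osborneUpdate A v j)
      = potential A v - (Real.sqrt (rowSum A v j) - Real.sqrt (colSum A v j))^2 := by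
  have hcol : ∑ m ∈ Finset.univ.erase j, Real.exp (v m - v j) * A m j = colSum A v j := by
    unfold colSum
    rw [← Finset.sum_erase_add _ _ (Finset.mem_univ j)]
    simp [hdiag j]
  have hrow2 : ∑ m ∈ Finset.univ.erase j, rowSum A v m = potential A v - rowSum A v j := by
    have := (Finset.sum_erase_add Finset.univ (fun m => rowSum A v m) (Finset.mem_univ j))
    rw [potential_eq_rowSum]
    linarith [this]
  rw [potential_eq_rowSum (A := A) (u := osborneUpdate A v j)]
  rw [← Finset.sum_erase_add _ _ (Finset.mem_univ j)]
  rw [Finset.sum_congr rfl (fun m hm => rowSum_update_other v (Finset.ne_of_mem_erase hm))]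
  rw [Finset.sum_add_distrib, ← Finset.mul_sum, hcol, hrow2,
    rowSum_update_balanced hdiag v j hr hc, exp_neg_del v j hr hc]
  have h1 : Real.sqrt (rowSum A v j) * Real.sqrt (rowSum A v j) = rowSum A v j :=
    Real.mul_self_sqrt hr.le
  have h2 : Real.sqrt (colSum A v j) * Real.sqrt (colSum A v j) = colSum A v j :=
    Real.mul_self_sqrt hc.le
  have hb : (0:ℝ) < Real.sqrt (colSum A v j) := Real.sqrt_pos.2 hc
  field_simp
  nlinarith [h1, h2]


/-- Partial cycle: apply the first `k` Osborne updates. -/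
noncomputable def W {n : ℕ} (A : Matrix (Fin n) (Fin n) ℝ) (u : Fin n → ℝ) (k : ℕ) :
    Fin n → ℝ := ((List.finRange n).take k).foldl (osborneUpdate A) u

lemma W_zero (u : Fin n → ℝ) : W A u 0 = u := rfl

lemma W_succ (u : Fin n → ℝ) {k : ℕ} (hk : k < n) :
    W A u (k+1) = osborneUpdate A (W A u k) ⟨k, hk⟩ := by
  unfold W
  rw [List.take_succ]
  have h : (List.finRange n)[k]? = some ⟨k, hk⟩ := by
    simp [List.getElem?_eq_getElem, List.length_finRange, hk]
  rw [h]
  simp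

lemma osborneCycle_eq_W (u : Fin n → ℝ) : osborneCycle A u = W A u n := by
  unfold osborneCycle W
  rw [List.take_of_length_le (le_of_eq (@List.length_finRange n))]

lemma W_apply_of_le (u : Fin n → ℝ) {k : ℕ} {j : Fin n} (h : k ≤ (j:ℕ)) :
    W A u k j = u j := by
  induction k with
  | zero => rfl
  | succ k ih =>
    have hk : k < n := by have := j.isLt; omega
    rw [W_succ u hk, update_other _ (by
      intro hEq
      have : (j:ℕ) = k := by rw [hEq]
      omega)]
    exact ih (by omega)

lemma W_stable (u : Fin n → ℝ) {j : Fin n} :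
    ∀ {k : ℕ}, (j:ℕ) < k → k ≤ n → W A u k j = W A u ((j:ℕ)+1) j := by
  intro k
  induction k with
  | zero => omega
  | succ k ih =>
    intro h1 h2
    rcases Nat.lt_or_ge (j:ℕ) k with h | h
    · have hk : k < n := by omega
      rw [W_succ u hk, update_other _ (by
        intro hEq
        have : (j:ℕ) = k := by rw [hEq]
        omega)]
      exact ih h (by omega)
    · have : (j:ℕ) = k := by omega
      rw [← this]

lemma W_top (u : Fin n → ℝ) (j : Fin n) :
    W A u n j = W A u (j:ℕ) j + del A (W A u (j:ℕ)) j := by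
  rw [W_stable u j.isLt (le_refl n), W_succ u j.isLt]
  have : (⟨(j:ℕ), j.isLt⟩ : Fin n) = j := rfl
  rw [this, update_self]


/-- The decrease contributed by update `i` during the cycle starting at `u`. -/
noncomputable def dd {n : ℕ} (A : Matrix (Fin n) (Fin n) ℝ) (u : Fin n → ℝ) (i : Fin n) : ℝ :=
  (Real.sqrt (rowSum A (W A u (i:ℕ)) i) - Real.sqrt (colSum A (W A u (i:ℕ)) i))^2

lemma dd_nonneg (u : Fin n → ℝ) (i : Fin n) : 0 ≤ dd A u i := sq_nonneg _

lemma filter_succ_insert {k : ℕ} (hk : k < n) :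
    Finset.univ.filter (fun i : Fin n => (i:ℕ) < k+1)
      = insert (⟨k, hk⟩ : Fin n) (Finset.univ.filter fun i : Fin n => (i:ℕ) < k) := by
  ext i
  simp only [Finset.mem_filter, Finset.mem_insert, Finset.mem_univ, true_and, Fin.ext_iff]
  omega

lemma potential_W (hA : ∀ i j, 0 ≤ A i j) (hdiag : ∀ i, A i i = 0)
    (hrow : ∀ j : Fin n, ∃ i, A j i ≠ 0) (hcol : ∀ j : Fin n, ∃ i, A i j ≠ 0)
    (u : Fin n → ℝ) : ∀ {k : ℕ}, k ≤ n →
    potential A (W A u k)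
      = potential A u - ∑ i ∈ Finset.univ.filter (fun i : Fin n => (i:ℕ) < k), dd A u i := by
  intro k
  induction k with
  | zero =>
    intro _
    simp [W_zero]
  | succ k ih =>
    intro hk1
    have hk : k < n := hk1
    rw [filter_succ_insert hk, Finset.sum_insert (by simp), W_succ u hk,
      potential_update hdiag _ _ (rowSum_pos hA _ _ (hrow _)) (colSum_pos hA _ _ (hcol _)),
      ih (le_of_lt hk)]
    have : dd A u ⟨k, hk⟩
        = (Real.sqrt (rowSum A (W A u k) ⟨k, hk⟩) - Real.sqrt (colSum A (W A u k) ⟨k, hk⟩))^2 :=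
      rfl
    rw [this]
    ring

lemma filter_lt_n_eq_univ :
    Finset.univ.filter (fun i : Fin n => (i:ℕ) < n) = Finset.univ :=
  Finset.filter_true_of_mem fun i _ => i.isLt

lemma potential_W_n (hA : ∀ i j, 0 ≤ A i j) (hdiag : ∀ i, A i i = 0)
    (hrow : ∀ j : Fin n, ∃ i, A j i ≠ 0) (hcol : ∀ j : Fin n, ∃ i, A i j ≠ 0)
    (u : Fin n → ℝ) :
    potential A (W A u n) = potential A u - ∑ i, dd A u i := by
  rw [potential_W hA hdiag hrow hcol u (le_refl n), filter_lt_n_eq_univ]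

lemma potential_W_le (hA : ∀ i j, 0 ≤ A i j) (hdiag : ∀ i, A i i = 0)
    (hrow : ∀ j : Fin n, ∃ i, A j i ≠ 0) (hcol : ∀ j : Fin n, ∃ i, A i j ≠ 0)
    (u : Fin n → ℝ) : potential A (W A u n) ≤ potential A u := by
  rw [potential_W_n hA hdiag hrow hcol u]
  have : 0 ≤ ∑ i, dd A u i := Finset.sum_nonneg fun i _ => dd_nonneg u i
  linarith


lemma grad_W (hA : ∀ i j, 0 ≤ A i j) (hdiag : ∀ i, A i i = 0)
    (hrow : ∀ j : Fin n, ∃ i, A j i ≠ 0) (hcol : ∀ j : Fin n, ∃ i, A i j ≠ 0)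
    (u : Fin n → ℝ) : ∀ {k : ℕ}, k ≤ n →
    ∑ j ∈ Finset.univ.filter (fun j : Fin n => (j:ℕ) < k),
        |rowSum A (W A u k) j - colSum A (W A u k) j|
      ≤ ∑ i ∈ Finset.univ.filter (fun i : Fin n => (i:ℕ) < k),
          |rowSum A (W A u (i:ℕ)) i - colSum A (W A u (i:ℕ)) i| := by
  intro k
  induction k with
  | zero => intro _; simp
  | succ k ih =>
    intro hk1
    have hk : k < n := hk1
    set jk : Fin n := ⟨k, hk⟩ with hjk
    set v : Fin n → ℝ := W A u k with hv
    have hr : 0 < rowSum A v jk := rowSum_pos hA _ _ (hrow _)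
    have hc : 0 < colSum A v jk := colSum_pos hA _ _ (hcol _)
    have hWs : W A u (k+1) = osborneUpdate A v jk := W_succ u hk
    rw [filter_succ_insert hk, Finset.sum_insert (by simp), Finset.sum_insert (by simp)]
    -- the updated coordinate is balanced
    have hbal : |rowSum A (W A u (k+1)) jk - colSum A (W A u (k+1)) jk| = 0 := by
      rw [hWs, rowSum_update_balanced hdiag v jk hr hc, colSum_update_balanced hdiag v jk hr hc,
        sub_self, abs_zero]
    rw [hbal, zero_add]
    -- perturbation of earlier coordinates
    set e : Fin n → ℝ := fun j =>
      |Real.exp (-del A v jk) - 1| * (Real.exp (v j - v jk) * A j jk)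
        + |Real.exp (del A v jk) - 1| * (Real.exp (v jk - v j) * A jk j) with he
    have he_nonneg : ∀ j, 0 ≤ e j := by
      intro j
      apply add_nonneg <;>
        exact mul_nonneg (abs_nonneg _) (mul_nonneg (Real.exp_pos _).le (hA _ _))
    have hstep : ∀ j ∈ Finset.univ.filter (fun j : Fin n => (j:ℕ) < k),
        |rowSum A (W A u (k+1)) j - colSum A (W A u (k+1)) j|
          ≤ |rowSum A v j - colSum A v j| + e j := by
      intro j hj
      have hjne : j ≠ jk := by
        intro hEq
        have := (Finset.mem_filter.1 hj).2
        rw [hEq] at this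
        simp [hjk] at this
      rw [hWs, rowSum_update_other v hjne, colSum_update_other v hjne]
      have habs : ∀ x y a b : ℝ, |x + a - (y + b)| ≤ |x - y| + (|a| + |b|) := by
        intro x y a b
        calc |x + a - (y + b)| = |(x - y) + (a + -b)| := by ring_nf
        _ ≤ |x - y| + |a + -b| := abs_add_le _ _
        _ ≤ |x - y| + (|a| + |b|) := by
            have := abs_add_le a (-b)
            rw [abs_neg] at this
            linarith
      refine le_trans (habs _ _ _ _) ?_
      have e1 : |(Real.exp (-del A v jk) - 1) * (Real.exp (v j - v jk) * A j jk)|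
          = |Real.exp (-del A v jk) - 1| * (Real.exp (v j - v jk) * A j jk) := by
        rw [abs_mul, abs_of_nonneg (mul_nonneg (Real.exp_pos _).le (hA _ _))]
      have e2 : |(Real.exp (del A v jk) - 1) * (Real.exp (v jk - v j) * A jk j)|
          = |Real.exp (del A v jk) - 1| * (Real.exp (v jk - v j) * A jk j) := by
        rw [abs_mul, abs_of_nonneg (mul_nonneg (Real.exp_pos _).le (hA _ _))]
      rw [e1, e2]
    have hsum_e : ∑ j, e j = |rowSum A v jk - colSum A v jk| := by
      rw [he]
      rw [Finset.sum_add_distrib, ← Finset.mul_sum, ← Finset.mul_sum]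
      have hc' : ∑ j, Real.exp (v j - v jk) * A j jk = colSum A v jk := rfl
      have hr' : ∑ j, Real.exp (v jk - v j) * A jk j = rowSum A v jk := rfl
      rw [hc', hr', exp_neg_del v jk hr hc, exp_del v jk hr hc]
      exact abs_combo_eq _ _ hr hc
    calc ∑ j ∈ Finset.univ.filter (fun j : Fin n => (j:ℕ) < k),
          |rowSum A (W A u (k+1)) j - colSum A (W A u (k+1)) j|
        ≤ ∑ j ∈ Finset.univ.filter (fun j : Fin n => (j:ℕ) < k),
            (|rowSum A v j - colSum A v j| + e j) := Finset.sum_le_sum hstep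
      _ = (∑ j ∈ Finset.univ.filter (fun j : Fin n => (j:ℕ) < k),
            |rowSum A v j - colSum A v j|)
          + ∑ j ∈ Finset.univ.filter (fun j : Fin n => (j:ℕ) < k), e j :=
          Finset.sum_add_distrib
      _ ≤ (∑ i ∈ Finset.univ.filter (fun i : Fin n => (i:ℕ) < k),
            |rowSum A (W A u (i:ℕ)) i - colSum A (W A u (i:ℕ)) i|)
          + ∑ j, e j := by
          refine add_le_add (ih (le_of_lt hk)) ?_
          exact Finset.sum_le_sum_of_subset_of_nonneg (Finset.filter_subset _ _)
            (fun j _ _ => he_nonneg j)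
      _ = |rowSum A (W A u ((⟨k, hk⟩ : Fin n):ℕ)) ⟨k, hk⟩
              - colSum A (W A u ((⟨k, hk⟩ : Fin n):ℕ)) ⟨k, hk⟩|
          + ∑ i ∈ Finset.univ.filter (fun i : Fin n => (i:ℕ) < k),
            |rowSum A (W A u (i:ℕ)) i - colSum A (W A u (i:ℕ)) i| := by
          rw [hsum_e]
          exact add_comm _ _

lemma grad_W_n (hA : ∀ i j, 0 ≤ A i j) (hdiag : ∀ i, A i i = 0)
    (hrow : ∀ j : Fin n, ∃ i, A j i ≠ 0) (hcol : ∀ j : Fin n, ∃ i, A i j ≠ 0)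
    (u : Fin n → ℝ) :
    ∑ j, |rowSum A (W A u n) j - colSum A (W A u n) j|
      ≤ ∑ i : Fin n, |rowSum A (W A u (i:ℕ)) i - colSum A (W A u (i:ℕ)) i| := by
  have := grad_W hA hdiag hrow hcol u (le_refl n)
  rwa [filter_lt_n_eq_univ] at this


lemma del_nonneg_of (v : Fin n → ℝ) (i : Fin n) (hr : 0 < rowSum A v i)
    (h : rowSum A v i ≤ colSum A v i) : 0 ≤ del A v i := by
  unfold del
  have := Real.log_le_log hr h
  linarith

lemma del_nonpos_of (v : Fin n → ℝ) (i : Fin n) (hc : 0 < colSum A v i)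
    (h : colSum A v i ≤ rowSum A v i) : del A v i ≤ 0 := by
  unfold del
  have := Real.log_le_log hc h
  linarith

lemma min_bound (hA : ∀ i j, 0 ≤ A i j) (hdiag : ∀ i, A i i = 0)
    (hrow : ∀ j : Fin n, ∃ i, A j i ≠ 0) (hcol : ∀ j : Fin n, ∃ i, A i j ≠ 0)
    (u : Fin n → ℝ) (i : Fin n) :
    min (rowSum A (W A u (i:ℕ)) i) (colSum A (W A u (i:ℕ)) i)
      ≤ (rowSum A (W A u n) i + colSum A (W A u n) i) + (rowSum A u i + colSum A u i) := by
  set v : Fin n → ℝ := W A u (i:ℕ) with hv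
  have hr : 0 < rowSum A v i := rowSum_pos hA _ _ (hrow _)
  have hc : 0 < colSum A v i := colSum_pos hA _ _ (hcol _)
  have hvi : W A u n i = v i + del A v i := W_top u i
  have hub : ∀ b : Fin n, (i:ℕ) ≤ (b:ℕ) → v b = u b := fun b hb => W_apply_of_le u hb
  have hvb : ∀ b : Fin n, (b:ℕ) < (i:ℕ) → W A u n b = v b := by
    intro b hb
    rw [hv, W_stable u hb (le_of_lt i.isLt), W_stable u (by omega : (b:ℕ) < n) (le_refl n)]
  rcases le_total (rowSum A v i) (colSum A v i) with h | h
  · -- row is the min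
    have hd : 0 ≤ del A v i := del_nonneg_of v i hr h
    rw [min_eq_left h]
    have hterm : ∀ b : Fin n,
        Real.exp (v i - v b) * A i b
          ≤ Real.exp (W A u n i - W A u n b) * A i b + Real.exp (u i - u b) * A i b := by
      intro b
      rcases Nat.lt_or_ge (b:ℕ) (i:ℕ) with hb | hb
      · have h1 : v i - v b ≤ W A u n i - W A u n b := by
          rw [hvi, hvb b hb]
          linarith
        have := mul_le_mul_of_nonneg_right (Real.exp_le_exp.2 h1) (hA i b)
        have h2 : 0 ≤ Real.exp (u i - u b) * A i b :=
          mul_nonneg (Real.exp_pos _).le (hA i b)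
        linarith
      · rw [hub i (le_refl _), hub b hb]
        have h2 : 0 ≤ Real.exp (W A u n i - W A u n b) * A i b :=
          mul_nonneg (Real.exp_pos _).le (hA i b)
        linarith
    have hsum : rowSum A v i ≤ rowSum A (W A u n) i + rowSum A u i := by
      unfold rowSum
      rw [← Finset.sum_add_distrib]
      exact Finset.sum_le_sum fun b _ => hterm b
    have h3 : 0 ≤ colSum A (W A u n) i := colSum_nonneg hA _ _
    have h4 : 0 ≤ colSum A u i := colSum_nonneg hA _ _
    linarith
  · -- column is the min
    have hd : del A v i ≤ 0 := del_nonpos_of v i hc h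
    rw [min_eq_right h]
    have hterm : ∀ b : Fin n,
        Real.exp (v b - v i) * A b i
          ≤ Real.exp (W A u n b - W A u n i) * A b i + Real.exp (u b - u i) * A b i := by
      intro b
      rcases Nat.lt_or_ge (b:ℕ) (i:ℕ) with hb | hb
      · have h1 : v b - v i ≤ W A u n b - W A u n i := by
          rw [hvi, hvb b hb]
          linarith
        have := mul_le_mul_of_nonneg_right (Real.exp_le_exp.2 h1) (hA b i)
        have h2 : 0 ≤ Real.exp (u b - u i) * A b i :=
          mul_nonneg (Real.exp_pos _).le (hA b i)
        linarith
      · rw [hub i (le_refl _), hub b hb]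
        have h2 : 0 ≤ Real.exp (W A u n b - W A u n i) * A b i :=
          mul_nonneg (Real.exp_pos _).le (hA b i)
        linarith
    have hsum : colSum A v i ≤ colSum A (W A u n) i + colSum A u i := by
      unfold colSum
      rw [← Finset.sum_add_distrib]
      exact Finset.sum_le_sum fun b _ => hterm b
    have h3 : 0 ≤ rowSum A (W A u n) i := rowSum_nonneg hA _ _
    have h4 : 0 ≤ rowSum A u i := rowSum_nonneg hA _ _
    linarith

lemma sum_min_le (hA : ∀ i j, 0 ≤ A i j) (hdiag : ∀ i, A i i = 0)
    (hrow : ∀ j : Fin n, ∃ i, A j i ≠ 0) (hcol : ∀ j : Fin n, ∃ i, A i j ≠ 0)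
    (u : Fin n → ℝ) :
    ∑ i : Fin n, min (rowSum A (W A u (i:ℕ)) i) (colSum A (W A u (i:ℕ)) i)
      ≤ 4 * potential A u := by
  have h1 : ∑ i : Fin n, min (rowSum A (W A u (i:ℕ)) i) (colSum A (W A u (i:ℕ)) i)
      ≤ ∑ i : Fin n, ((rowSum A (W A u n) i + colSum A (W A u n) i)
          + (rowSum A u i + colSum A u i)) :=
    Finset.sum_le_sum fun i _ => min_bound hA hdiag hrow hcol u i
  have h2 : ∑ i : Fin n, ((rowSum A (W A u n) i + colSum A (W A u n) i)
        + (rowSum A u i + colSum A u i))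
      = 2 * potential A (W A u n) + 2 * potential A u := by
    rw [Finset.sum_add_distrib, Finset.sum_add_distrib, Finset.sum_add_distrib,
      ← potential_eq_rowSum, ← potential_eq_colSum, ← potential_eq_rowSum, ← potential_eq_colSum]
    ring
  have h3 := potential_W_le hA hdiag hrow hcol u
  linarith


lemma cycle_sq_bound (hA : ∀ i j, 0 ≤ A i j) (hdiag : ∀ i, A i i = 0)
    (hrow : ∀ j : Fin n, ∃ i, A j i ≠ 0) (hcol : ∀ j : Fin n, ∃ i, A i j ≠ 0)
    (u : Fin n → ℝ) :
    (∑ j, |rowSum A (osborneCycle A u) j - colSum A (osborneCycle A u) j|)^2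
      ≤ 25 * potential A u * (potential A u - potential A (osborneCycle A u)) := by
  rw [osborneCycle_eq_W]
  set φ0 := potential A u with hφ0def
  set D := φ0 - potential A (W A u n) with hD
  have hDnn : 0 ≤ D := sub_nonneg.2 (potential_W_le hA hdiag hrow hcol u)
  have hDle : D ≤ φ0 := by
    have := potential_nonneg hA (W A u n)
    rw [hD]; linarith
  have hφ0 : 0 ≤ φ0 := potential_nonneg hA u
  set G := ∑ j, |rowSum A (W A u n) j - colSum A (W A u n) j| with hG
  have hGnn : 0 ≤ G := Finset.sum_nonneg fun _ _ => abs_nonneg _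
  set mm : Fin n → ℝ := fun i => min (rowSum A (W A u (i:ℕ)) i) (colSum A (W A u (i:ℕ)) i)
    with hmm
  have hmm_nonneg : ∀ i, 0 ≤ mm i := fun i =>
    le_min (rowSum_nonneg hA _ _) (colSum_nonneg hA _ _)
  have hsdd : ∑ i : Fin n, dd A u i = D := by
    have := potential_W_n hA hdiag hrow hcol u
    rw [hD]
    linarith
  have h2 : ∀ i : Fin n, |rowSum A (W A u (i:ℕ)) i - colSum A (W A u (i:ℕ)) i|
      ≤ dd A u i + 2 * Real.sqrt (dd A u i) * Real.sqrt (mm i) := by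
    intro i
    have h := abs_le_sq_add_min (rowSum A (W A u (i:ℕ)) i) (colSum A (W A u (i:ℕ)) i)
      (rowSum_nonneg hA _ _) (colSum_nonneg hA _ _)
    have hdd2 : Real.sqrt (dd A u i)
        = |Real.sqrt (rowSum A (W A u (i:ℕ)) i) - Real.sqrt (colSum A (W A u (i:ℕ)) i)| :=
      Real.sqrt_sq_eq_abs _
    rw [hdd2]
    exact h
  set S2 := ∑ i : Fin n, Real.sqrt (dd A u i) * Real.sqrt (mm i) with hS2
  have hS2nn : 0 ≤ S2 :=
    Finset.sum_nonneg fun i _ => mul_nonneg (Real.sqrt_nonneg _) (Real.sqrt_nonneg _)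
  have h3 : G ≤ D + 2 * S2 := by
    calc G ≤ ∑ i : Fin n, |rowSum A (W A u (i:ℕ)) i - colSum A (W A u (i:ℕ)) i| :=
          grad_W_n hA hdiag hrow hcol u
      _ ≤ ∑ i : Fin n, (dd A u i + 2 * Real.sqrt (dd A u i) * Real.sqrt (mm i)) :=
          Finset.sum_le_sum fun i _ => h2 i
      _ = D + 2 * S2 := by
          rw [Finset.sum_add_distrib, hsdd, hS2, Finset.mul_sum]
          congr 1
          exact Finset.sum_congr rfl fun i _ => by ring
  have h4 : S2^2 ≤ D * (4 * φ0) := by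
    have hcs := Finset.sum_mul_sq_le_sq_mul_sq Finset.univ
      (fun i => Real.sqrt (dd A u i)) (fun i => Real.sqrt (mm i))
    have e1 : ∑ i : Fin n, (Real.sqrt (dd A u i))^2 = D := by
      rw [← hsdd]
      exact Finset.sum_congr rfl fun i _ => Real.sq_sqrt (dd_nonneg u i)
    have e2 : ∑ i : Fin n, (Real.sqrt (mm i))^2 = ∑ i : Fin n, mm i :=
      Finset.sum_congr rfl fun i _ => Real.sq_sqrt (hmm_nonneg i)
    have e3 : ∑ i : Fin n, mm i ≤ 4 * φ0 := sum_min_le hA hdiag hrow hcol u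
    rw [e1, e2] at hcs
    calc S2^2 ≤ D * (∑ i : Fin n, mm i) := hcs
      _ ≤ D * (4 * φ0) := by
          exact mul_le_mul_of_nonneg_left e3 hDnn
  set t := Real.sqrt (D * φ0) with ht
  have htnn : 0 ≤ t := Real.sqrt_nonneg _
  have ht2 : t^2 = D * φ0 := Real.sq_sqrt (mul_nonneg hDnn hφ0)
  have hS2t : S2 ≤ 2 * t := by
    nlinarith [h4, ht2, hS2nn, htnn]
  have hDt : D ≤ t := by
    nlinarith [ht2, hDle, hDnn, htnn]
  have hG5t : G ≤ 5 * t := by linarith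
  calc G^2 ≤ (5*t)^2 := by nlinarith [hGnn, hG5t]
    _ = 25 * (D * φ0) := by rw [mul_pow]; rw [ht2]; ring
    _ = 25 * φ0 * D := by ring


lemma iter_succ (u0 : Fin n → ℝ) (k : ℕ) :
    osborneIter A u0 (k+1) = osborneCycle A (osborneIter A u0 k) :=
  Function.iterate_succ_apply' _ _ _


end Osb

set_option maxHeartbeats 1000000 in
/-- Weak convergence bound: there is a universal constant C such that for every balanceable
nonnegative matrix A, accuracy eps in (0,1), and starting point u0, cyclic Osborne produces
an eps-balanced iterate within C (log2(φ(u0)/φ*) + 1) / eps^2 cycles. -/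
theorem osborne_weak_convergence :
    ∃ C : ℝ, 0 < C ∧
      ∀ (n : ℕ) (A : Matrix (Fin n) (Fin n) ℝ),
        (∀ i j, 0 ≤ A i j) → (∀ i, A i i = 0) →
        (∀ j : Fin n, ∃ i, A j i ≠ 0) → (∀ j : Fin n, ∃ i, A i j ≠ 0) →
        ∀ ustar : Fin n → ℝ, (∀ u : Fin n → ℝ, potential A ustar ≤ potential A u) →
        (∀ i, rowSum A ustar i = colSum A ustar i) →
        ∀ (u0 : Fin n → ℝ) (eps : ℝ), 0 < eps → eps < 1 →
        ∃ t : ℕ,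
          (t : ℝ) ≤ C * (Real.logb 2 (potential A u0 / potential A ustar) + 1) / eps ^ 2 ∧
          (∑ j, |rowSum A (osborneIter A u0 t) j - colSum A (osborneIter A u0 t) j|)
              / potential A (osborneIter A u0 t) ≤ eps := by
  classical
  refine ⟨100, by norm_num, ?_⟩
  intro n A hA hdiag hrow hcol ustar hmin hbal u0 eps heps0 heps1
  by_cases hn : n = 0
  · subst hn
    have h0 : ∀ v : Fin 0 → ℝ, potential A v = 0 := fun v => by simp [potential]
    refine ⟨0, ?_, ?_⟩
    · rw [h0, h0]
      simp only [Nat.cast_zero, zero_div, Real.logb_zero, zero_add]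
      positivity
    · simp only [Finset.univ_eq_empty, Finset.sum_empty, zero_div]
      exact heps0.le
  · have hn' : 0 < n := Nat.pos_of_ne_zero hn
    set Φ : ℕ → ℝ := fun k => potential A (osborneIter A u0 k) with hΦ
    set Gf : ℕ → ℝ := fun k =>
      ∑ j, |rowSum A (osborneIter A u0 k) j - colSum A (osborneIter A u0 k) j| with hGf
    have hΦpos : ∀ k, 0 < Φ k := fun k => Osb.potential_pos hA hrow hn' _
    have hstar_pos : 0 < potential A ustar := Osb.potential_pos hA hrow hn' _
    have hstar_le : ∀ k, potential A ustar ≤ Φ k := fun k => hmin _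
    have hcycle : ∀ k, (Gf (k+1))^2 ≤ 25 * Φ k * (Φ k - Φ (k+1)) := by
      intro k
      have h := Osb.cycle_sq_bound hA hdiag hrow hcol (osborneIter A u0 k)
      have e : osborneCycle A (osborneIter A u0 k) = osborneIter A u0 (k+1) :=
        (Osb.iter_succ u0 k).symm
      rw [e] at h
      exact h
    have hGnn : ∀ k, 0 ≤ Gf k := fun k => Finset.sum_nonneg fun _ _ => abs_nonneg _
    have hmono : ∀ k, Φ (k+1) ≤ Φ k := by
      intro k
      nlinarith [hcycle k, hΦpos k, sq_nonneg (Gf (k+1))]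
    set q : ℝ := 1 - eps^2/100 with hq
    have heps2 : eps^2 < 1 := by nlinarith
    have hq0 : 0 < q := by rw [hq]; nlinarith
    have hq1 : q < 1 := by rw [hq]; nlinarith
    have hkey : ∀ k, eps * Φ (k+1) < Gf (k+1) → Φ (k+1) ≤ q * Φ k := by
      intro k hGlt
      by_contra hcon
      push_neg at hcon
      have h1 : Φ k - Φ (k+1) < eps^2/100 * Φ k := by
        rw [hq] at hcon
        nlinarith [hΦpos k]
      have h2 : Φ k / 2 < Φ (k+1) := by
        rw [hq] at hcon
        nlinarith [hΦpos k]
      have e2 : 0 < eps * Φ (k+1) := mul_pos heps0 (hΦpos (k+1))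
      have e3 : (eps * Φ (k+1))^2 < (Gf (k+1))^2 := by
        have h4 : eps * Φ (k+1) < Gf (k+1) := hGlt
        nlinarith
      have e4 : 25 * Φ k * (Φ k - Φ (k+1)) < eps^2 * (Φ k)^2 / 4 := by
        nlinarith [hΦpos k]
      have e5 : eps^2 * (Φ k)^2 / 4 < (eps * Φ (k+1))^2 := by
        have hp : 0 < eps * eps * ((Φ (k+1) - Φ k / 2) * (Φ (k+1) + Φ k / 2)) :=
          mul_pos (mul_pos heps0 heps0)
            (mul_pos (sub_pos.2 h2) (by linarith [hΦpos k, hΦpos (k+1)]))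
        nlinarith [hp]
      nlinarith [hcycle k]
    have hPex : ∃ t, Gf t ≤ eps * Φ t := by
      by_contra hno
      push_neg at hno
      have hgeo : ∀ k, Φ k ≤ q^k * Φ 0 := by
        intro k
        induction k with
        | zero => simp
        | succ k ih =>
          calc Φ (k+1) ≤ q * Φ k := hkey k (hno (k+1))
            _ ≤ q * (q^k * Φ 0) := mul_le_mul_of_nonneg_left ih hq0.le
            _ = q^(k+1) * Φ 0 := by ring
      obtain ⟨k, hk⟩ := exists_pow_lt_of_lt_one (div_pos hstar_pos (hΦpos 0)) hq1
      have h4 : q^k * Φ 0 < (potential A ustar / Φ 0) * Φ 0 :=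
        mul_lt_mul_of_pos_right hk (hΦpos 0)
      rw [div_mul_cancel₀ _ (ne_of_gt (hΦpos 0))] at h4
      have := hgeo k
      linarith [hstar_le k]
    set t := Nat.find hPex with htdef
    have hPt : Gf t ≤ eps * Φ t := Nat.find_spec hPex
    have hx1 : 1 ≤ Φ 0 / potential A ustar := (one_le_div hstar_pos).2 (hstar_le 0)
    have hL0 : 0 ≤ Real.logb 2 (Φ 0 / potential A ustar) :=
      Real.logb_nonneg one_lt_two hx1
    have hΦ0eq : potential A u0 = Φ 0 := rfl
    refine ⟨t, ?_, ?_⟩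
    · -- the bound on t
      rw [hΦ0eq]
      rcases Nat.eq_zero_or_pos t with ht0 | htpos
      · rw [ht0]
        push_cast
        positivity
      · obtain ⟨s, hs⟩ : ∃ s, t = s + 1 := ⟨t - 1, by omega⟩
        have hfail : ∀ j, j < t → eps * Φ j < Gf j := by
          intro j hj
          exact lt_of_not_ge (Nat.find_min hPex hj)
        have hgeo : ∀ k, k ≤ s → Φ k ≤ q^k * Φ 0 := by
          intro k
          induction k with
          | zero => intro _; simp
          | succ k ih =>
            intro hk
            calc Φ (k+1) ≤ q * Φ k := hkey k (hfail (k+1) (by omega))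
              _ ≤ q * (q^k * Φ 0) := mul_le_mul_of_nonneg_left (ih (by omega)) hq0.le
              _ = q^(k+1) * Φ 0 := by ring
        have hΦs : potential A ustar ≤ q^s * Φ 0 := le_trans (hstar_le s) (hgeo s le_rfl)
        have hlogq : Real.log q ≤ -(eps^2/100) := by
          have := Real.log_le_sub_one_of_pos hq0
          rw [hq] at this ⊢
          linarith
        have hq_pow_pos : 0 < q^s := pow_pos hq0 s
        have hlog1 : Real.log (potential A ustar) ≤ (s:ℝ) * Real.log q + Real.log (Φ 0) := by
          have h5 := Real.log_le_log hstar_pos hΦs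
          rwa [Real.log_mul (ne_of_gt hq_pow_pos) (ne_of_gt (hΦpos 0)), Real.log_pow] at h5
        have hsb : (s:ℝ) * (eps^2/100) ≤ Real.log (Φ 0 / potential A ustar) := by
          rw [Real.log_div (ne_of_gt (hΦpos 0)) (ne_of_gt hstar_pos)]
          have h6 : (s:ℝ) * (eps^2/100) ≤ (s:ℝ) * (-Real.log q) :=
            mul_le_mul_of_nonneg_left (by linarith) (Nat.cast_nonneg s)
          linarith
        have hlogb : Real.log (Φ 0 / potential A ustar)
            ≤ Real.logb 2 (Φ 0 / potential A ustar) := by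
          have hlx : 0 ≤ Real.log (Φ 0 / potential A ustar) := Real.log_nonneg hx1
          have hl2 : 0 < Real.log 2 := Real.log_pos one_lt_two
          have hl2' : Real.log 2 ≤ 1 := by
            have := Real.log_le_sub_one_of_pos (by norm_num : (0:ℝ) < 2)
            linarith
          rw [Real.logb, le_div_iff₀ hl2]
          nlinarith
        have hs_bound : (s:ℝ) * eps^2 ≤ 100 * Real.logb 2 (Φ 0 / potential A ustar) := by
          linarith only [hsb, hlogb]
        have ht_cast : (t:ℝ) = (s:ℝ) + 1 := by rw [hs]; push_cast; ring
        rw [ht_cast, le_div_iff₀ (by positivity : (0:ℝ) < eps^2)]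
        linarith only [hs_bound, heps2, heps0, hL0]
    · -- the quality guarantee
      rw [div_le_iff₀ (hΦpos t)]
      exact hPt
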